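/- Let K be a convex set contained in the unit cube Q = [0,1]ⁿ, let μ be a nonzero locally finite nonnegative Borel measure on ℝⁿ which is doubling with respect to axis-parallel cubes with constant δ_μ, and let m be a positive integer with √n·2^{−m} < 1. Let {Q_j} be the dyadic subcubes of Q of sidelength 2^{−m} that are disjoint from K. Then μ(⋃_j Q_j) + μ(K) ≥ ξ_m·μ(Q), where ξ_m = 1 − 9·δ_μ^{4 + ⌈log₂(34√n)⌉}·(log₂(2^m/√n))^{−1}; in particular ξ_m → 1 as m → ∞. -/

import Mathlib

open MeasureTheory Set Filter
open scoped ENNReal Topology Pointwise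

noncomputable section

/-- The maximal operator `M_{𝔅,μ}` associated to a measure `μ` and a collection `𝔅`
of subsets of `ℝⁿ`, applied to `f` at the point `x` (valued in `ℝ≥0∞`; it equals `0`
outside the union of `𝔅`). -/
noncomputable def maxOp {n : ℕ} (μ : Measure (EuclideanSpace ℝ (Fin n)))
    (𝔅 : Set (Set (EuclideanSpace ℝ (Fin n))))
    (f : EuclideanSpace ℝ (Fin n) → ℝ) (x : EuclideanSpace ℝ (Fin n)) : ℝ≥0∞ :=
  ⨆ (B : Set (EuclideanSpace ℝ (Fin n))) (_ : B ∈ 𝔅) (_ : x ∈ B) (_ : 0 < μ B),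
    (∫⁻ y in B, ENNReal.ofReal |f y| ∂μ) / μ B

/-- A collection of sets is homothecy invariant if it is closed under translations and
positive dilations. -/
def HomothecyInvariant {n : ℕ} (𝔅 : Set (Set (EuclideanSpace ℝ (Fin n)))) : Prop :=
  ∀ B ∈ 𝔅, (∀ y : EuclideanSpace ℝ (Fin n), y +ᵥ B ∈ 𝔅) ∧ (∀ s : ℝ, 0 < s → s • B ∈ 𝔅)

/-- `μ` is doubling with respect to the collection `𝔅`, with constant `Δ`: whenever
`B ∈ 𝔅` and a translate of the dilate `2·B` contains `B`, its measure is at most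
`Δ·μ(B)`. -/
def DoublingWrt {n : ℕ} (μ : Measure (EuclideanSpace ℝ (Fin n)))
    (𝔅 : Set (Set (EuclideanSpace ℝ (Fin n)))) (Δ : ℝ) : Prop :=
  ∀ B ∈ 𝔅, ∀ σ : EuclideanSpace ℝ (Fin n),
    B ⊆ σ +ᵥ (2 : ℝ) • B → μ (σ +ᵥ (2 : ℝ) • B) ≤ ENNReal.ofReal Δ * μ B

/-- A member of a basis of convex sets: nonempty, bounded, open and convex. -/
def IsConvexBasisSet {n : ℕ} (B : Set (EuclideanSpace ℝ (Fin n))) : Prop :=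
  B.Nonempty ∧ Bornology.IsBounded B ∧ IsOpen B ∧ Convex ℝ B

/-- An open axis-parallel rectangle in `ℝⁿ`. -/
def IsAxisRect {n : ℕ} (R : Set (EuclideanSpace ℝ (Fin n))) : Prop :=
  ∃ a b : Fin n → ℝ, (∀ i, a i < b i) ∧ R = {x | ∀ i, x i ∈ Set.Ioo (a i) (b i)}

/-- An open rectangle (possibly rotated rectangular parallelepiped) in `ℝⁿ`:
the image of an open axis-parallel rectangle under a rigid motion. -/
def IsRect {n : ℕ} (R : Set (EuclideanSpace ℝ (Fin n))) : Prop :=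
  ∃ (f : EuclideanSpace ℝ (Fin n) ≃ᵢ EuclideanSpace ℝ (Fin n))
    (S : Set (EuclideanSpace ℝ (Fin n))), IsAxisRect S ∧ R = f '' S

/-- An open axis-parallel cube in `ℝⁿ`. -/
def IsAxisCube {n : ℕ} (C : Set (EuclideanSpace ℝ (Fin n))) : Prop :=
  ∃ (a : Fin n → ℝ) (s : ℝ), 0 < s ∧ C = {x | ∀ i, x i ∈ Set.Ioo (a i) (a i + s)}

/-- `M_{𝔅,μ}` is bounded on `L^p(ν)`. -/
def BoundedOnLp {n : ℕ} (μ ν : Measure (EuclideanSpace ℝ (Fin n)))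
    (𝔅 : Set (Set (EuclideanSpace ℝ (Fin n)))) (p : ℝ) : Prop :=
  ∃ C : ℝ≥0∞, C ≠ ⊤ ∧ ∀ f : EuclideanSpace ℝ (Fin n) → ℝ, Measurable f →
    ∫⁻ x, maxOp μ 𝔅 f x ^ p ∂ν ≤ C * ∫⁻ x, ENNReal.ofReal |f x| ^ p ∂ν

/-- The Tauberian condition for `M_{𝔅,μ}` at level `γ`, with constant `c`, with respect
to the measure `ν`. -/
def TauberianCond {n : ℕ} (μ ν : Measure (EuclideanSpace ℝ (Fin n)))
    (𝔅 : Set (Set (EuclideanSpace ℝ (Fin n)))) (γ c : ℝ) : Prop :=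
  ∀ E : Set (EuclideanSpace ℝ (Fin n)), MeasurableSet E →
    ν {x | ENNReal.ofReal γ < maxOp μ 𝔅 (E.indicator 1) x} ≤ ENNReal.ofReal c * ν E

/-- The standard open dyadic box of scale `2^k` and position `m` in `ℝⁿ`. -/
def stdBox (n : ℕ) (k : ℤ) (m : Fin n → ℤ) : Set (Fin n → ℝ) :=
  {x | ∀ i, (m i : ℝ) * 2 ^ k < x i ∧ x i < ((m i : ℝ) + 1) * 2 ^ k}

/-- A parametrization of a rectangular grid: a rigid motion composed with a positive
diagonal scaling. The image of the standard unit box under such a map is a rectangle. -/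
def IsRectParam {n : ℕ} (T : (Fin n → ℝ) → EuclideanSpace ℝ (Fin n)) : Prop :=
  ∃ (f : EuclideanSpace ℝ (Fin n) ≃ᵢ EuclideanSpace ℝ (Fin n)) (l : Fin n → ℝ),
    (∀ i, 0 < l i) ∧
    ∀ x, T x = f ((WithLp.equiv 2 (Fin n → ℝ)).symm (fun i => l i * x i))

/-- The dyadic mesh generated by a rectangle parametrized by `T`. -/
def dyadicMesh {n : ℕ} (T : (Fin n → ℝ) → EuclideanSpace ℝ (Fin n)) :
    Set (Set (EuclideanSpace ℝ (Fin n))) :=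
  {S | ∃ (k : ℤ) (m : Fin n → ℤ), S = T '' stdBox n k m}

/-- `S` is a dyadic descendant of the rectangle `R`, `s` generations inside `R`. -/
def DyadicDescendant {n : ℕ} (R S : Set (EuclideanSpace ℝ (Fin n))) (s : ℕ) : Prop :=
  ∃ T : (Fin n → ℝ) → EuclideanSpace ℝ (Fin n), IsRectParam T ∧
    T '' stdBox n 0 0 = R ∧
    ∃ m : Fin n → ℤ, (∀ i, 0 ≤ m i ∧ m i < 2 ^ s) ∧ S = T '' stdBox n (-(s : ℤ)) m

/-- The family of all homothetic copies (translates and positive dilates) of `R₀`. -/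
def homCopies {n : ℕ} (R₀ : Set (EuclideanSpace ℝ (Fin n))) :
    Set (Set (EuclideanSpace ℝ (Fin n))) :=
  {S | ∃ (y : EuclideanSpace ℝ (Fin n)) (s : ℝ), 0 < s ∧ S = y +ᵥ s • R₀}

/-- Iterated halo sets `H_β^k(E)`: `H_β^0(E) = E` and
`H_β^{k+1}(E) = {x : M_{𝔊,μ}(1_{H_β^k(E)})(x) ≥ β}`. -/
def Hiter {n : ℕ} (μ : Measure (EuclideanSpace ℝ (Fin n)))
    (𝔊 : Set (Set (EuclideanSpace ℝ (Fin n)))) (β : ℝ)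
    (E : Set (EuclideanSpace ℝ (Fin n))) : ℕ → Set (EuclideanSpace ℝ (Fin n))
  | 0 => E
  | k + 1 => {x | ENNReal.ofReal β ≤ maxOp μ 𝔊 ((Hiter μ 𝔊 β E k).indicator 1) x}

/-- The Muckenhoupt `A_{p,𝔅}` condition for a weight `w` (with respect to Lebesgue
measure); here `1 - p/(p-1) = 1 - p'`. -/
def MuckenhouptAp {n : ℕ} (𝔅 : Set (Set (EuclideanSpace ℝ (Fin n))))
    (w : EuclideanSpace ℝ (Fin n) → ℝ) (p : ℝ) : Prop :=
  ∃ C : ℝ≥0∞, C ≠ ⊤ ∧ ∀ B ∈ 𝔅,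
    ((∫⁻ x in B, ENNReal.ofReal (w x) ∂volume) / volume B) *
      (((∫⁻ x in B, ENNReal.ofReal (w x) ^ (1 - p / (p - 1)) ∂volume) / volume B) ^ (p - 1))
      ≤ C

/-- `𝔅` is a Muckenhoupt basis: for every `1 < p < ∞` and every weight `w ∈ A_{p,𝔅}`,
the maximal operator `M_𝔅` is bounded on `L^p(w)`. -/
def MuckenhouptBasis {n : ℕ} (𝔅 : Set (Set (EuclideanSpace ℝ (Fin n)))) : Prop :=
  ∀ p : ℝ, 1 < p → ∀ w : EuclideanSpace ℝ (Fin n) → ℝ, (∀ x, 0 ≤ w x) →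
    LocallyIntegrable w volume → MuckenhouptAp 𝔅 w p →
    BoundedOnLp volume (volume.withDensity fun x => ENNReal.ofReal (w x)) 𝔅 p

end

open Metric
open scoped RealInnerProductSpace

namespace S15
set_option maxHeartbeats 1000000

variable {n : ℕ}

abbrev E (n : ℕ) := EuclideanSpace ℝ (Fin n)

/-- open axis cube centered at `c` with side `s` -/
def oc (c : E n) (s : ℝ) : Set (E n) := {x | ∀ i, |x i - c i| < s / 2}

lemma mem_oc {c x : E n} {s : ℝ} : x ∈ oc c s ↔ ∀ i, |x i - c i| < s / 2 := Iff.rfl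

lemma oc_subset_oc {c : E n} {s t : ℝ} (h : s ≤ t) : oc c s ⊆ oc c t :=
  fun x hx i => lt_of_lt_of_le (hx i) (by linarith)

lemma isAxisCube_oc (c : E n) {s : ℝ} (hs : 0 < s) : IsAxisCube (oc c s) := by
  refine ⟨fun i => c i - s / 2, s, hs, ?_⟩
  ext x
  simp only [oc, mem_setOf_eq, mem_Ioo]
  constructor
  · intro h i; have := h i; rw [abs_lt] at this; constructor <;> linarith [this.1, this.2]
  · intro h i; rw [abs_lt]; have := h i; constructor <;> linarith [this.1, this.2]

lemma isOpen_oc (c : E n) (s : ℝ) : IsOpen (oc c s) := by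
  have : oc c s = ⋂ i, (fun x : E n => x i) ⁻¹' (Set.Ioo (c i - s/2) (c i + s/2)) := by
    ext x
    simp only [oc, mem_setOf_eq, mem_iInter, mem_preimage, mem_Ioo, abs_lt]
    constructor
    · intro h i; have := h i; constructor <;> linarith [this.1, this.2]
    · intro h i; have := h i; constructor <;> linarith [this.1, this.2]
  rw [this]
  exact isOpen_iInter_of_finite fun i =>
    (isOpen_Ioo).preimage (EuclideanSpace.proj i).continuous

lemma dbl_step {μ : Measure (E n)} {δ : ℝ}
    (hdbl : DoublingWrt μ {C | IsAxisCube C} δ) (c : E n) {s : ℝ} (hs : 0 < s) :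
    μ (oc c (2 * s)) ≤ ENNReal.ofReal δ * μ (oc c s) := by
  have key : oc c (2 * s) = (-c) +ᵥ (2 : ℝ) • (oc c s) := by
    ext x
    rw [Set.mem_vadd_set_iff_neg_vadd_mem]
    simp only [neg_neg, vadd_eq_add]
    constructor
    · intro hx
      refine ⟨(2:ℝ)⁻¹ • (c + x), fun i => ?_, by simp [smul_smul]⟩
      have := hx i
      simp only [PiLp.smul_apply, PiLp.add_apply, smul_eq_mul]
      rw [abs_lt] at this ⊢
      constructor <;> [nlinarith [this.1]; nlinarith [this.2]]
    · rintro ⟨y, hy, heq⟩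
      intro i
      have hco := congrArg (fun v : E n => v i) heq
      simp only [PiLp.add_apply, PiLp.smul_apply, smul_eq_mul] at hco
      have := hy i
      rw [abs_lt] at this ⊢
      constructor <;> [nlinarith [this.1, hco]; nlinarith [this.2, hco]]
  have hsub : oc c s ⊆ (-c) +ᵥ (2 : ℝ) • (oc c s) := by
    rw [← key]; exact oc_subset_oc (by linarith)
  have := hdbl (oc c s) (isAxisCube_oc c hs) (-c) hsub
  rw [← key] at this
  exact this

lemma dbl_chain {μ : Measure (E n)} {δ : ℝ}
    (hdbl : DoublingWrt μ {C | IsAxisCube C} δ) (c : E n) {s : ℝ} (hs : 0 < s) (t : ℕ) :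
    μ (oc c (2 ^ t * s)) ≤ (ENNReal.ofReal δ) ^ t * μ (oc c s) := by
  induction t with
  | zero => simp
  | succ k ih =>
      have h1 : (2:ℝ) ^ (k+1) * s = 2 * (2 ^ k * s) := by ring
      rw [h1]
      calc μ (oc c (2 * (2 ^ k * s))) ≤ ENNReal.ofReal δ * μ (oc c (2 ^ k * s)) :=
            dbl_step hdbl c (by positivity)
        _ ≤ ENNReal.ofReal δ * ((ENNReal.ofReal δ) ^ k * μ (oc c s)) := by
            exact mul_le_mul_right ih _
        _ = (ENNReal.ofReal δ) ^ (k+1) * μ (oc c s) := by ring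



lemma coord_le_dist (x y : E n) (i : Fin n) : |x i - y i| ≤ dist x y := by
  rw [EuclideanSpace.dist_eq]
  have h1 : |x i - y i| = Real.sqrt (dist (x i) (y i) ^ 2) := by
    rw [Real.dist_eq, Real.sqrt_sq_eq_abs, abs_abs]
  rw [h1]
  apply Real.sqrt_le_sqrt
  exact Finset.single_le_sum (f := fun j => dist (x j) (y j) ^ 2)
    (fun j _ => sq_nonneg _) (Finset.mem_univ i)

lemma dist_le_sqrt_mul (x y : E n) {s : ℝ} (hs : 0 ≤ s) (h : ∀ i, |x i - y i| ≤ s) :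
    dist x y ≤ Real.sqrt n * s := by
  rw [EuclideanSpace.dist_eq]
  have h2 : ∑ i, dist (x i) (y i) ^ 2 ≤ (n : ℝ) * s ^ 2 := by
    calc ∑ i, dist (x i) (y i) ^ 2 ≤ ∑ _i : Fin n, s ^ 2 := by
          apply Finset.sum_le_sum
          intro i _
          have := h i
          rw [Real.dist_eq]
          nlinarith [abs_nonneg (x i - y i)]
      _ = (n : ℝ) * s ^ 2 := by simp [Finset.sum_const, Finset.card_univ]
  calc Real.sqrt (∑ i, dist (x i) (y i) ^ 2) ≤ Real.sqrt ((n:ℝ) * s ^ 2) :=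
        Real.sqrt_le_sqrt h2
    _ = Real.sqrt n * s := by
        rw [Real.sqrt_mul (Nat.cast_nonneg n), Real.sqrt_sq hs]

lemma dist_lt_sqrt_mul (hn : 0 < n) (x y : E n) {s : ℝ} (h : ∀ i, |x i - y i| < s) :
    dist x y < Real.sqrt n * s := by
  have hs : 0 < s := lt_of_le_of_lt (abs_nonneg _) (h ⟨0, hn⟩)
  rw [EuclideanSpace.dist_eq]
  have h2 : ∑ i, dist (x i) (y i) ^ 2 < (n : ℝ) * s ^ 2 := by
    calc ∑ i, dist (x i) (y i) ^ 2 < ∑ _i : Fin n, s ^ 2 := by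
          apply Finset.sum_lt_sum_of_nonempty
          · exact Finset.univ_nonempty_iff.2 ⟨⟨0, hn⟩⟩
          · intro i _
            have := h i
            rw [Real.dist_eq]
            nlinarith [abs_nonneg (x i - y i)]
      _ = (n : ℝ) * s ^ 2 := by simp [Finset.sum_const, Finset.card_univ]
  calc Real.sqrt (∑ i, dist (x i) (y i) ^ 2) < Real.sqrt ((n:ℝ) * s ^ 2) := by
        apply Real.sqrt_lt_sqrt (by positivity) h2
    _ = Real.sqrt n * s := by
        rw [Real.sqrt_mul (Nat.cast_nonneg n), Real.sqrt_sq hs.le]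

lemma le_infDist' {α : Type*} [PseudoMetricSpace α] {s : Set α} (hs : s.Nonempty) {x : α}
    {b : ℝ} (h : ∀ y ∈ s, b ≤ dist x y) : b ≤ infDist x s := by
  by_contra hlt
  push_neg at hlt
  obtain ⟨y, hy, hdy⟩ := (infDist_lt_iff hs).1 hlt
  exact absurd (h y hy) (by linarith)

lemma exists_maximal_separated (W : Set (E n)) {σ : ℝ} (hσ : 0 < σ) :
    ∃ T ⊆ W, T.Countable ∧ (T.Pairwise fun a b => σ ≤ dist a b) ∧
      ∀ x ∈ W, ∃ t ∈ T, dist x t < σ := by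
  set S : Set (Set (E n)) := {T | T ⊆ W ∧ T.Pairwise fun a b => σ ≤ dist a b} with hS
  have hzorn := zorn_subset_nonempty S ?_ ∅ ⟨empty_subset _, Set.pairwise_empty _⟩
  · obtain ⟨T, -, hTmax⟩ := hzorn
    have hTS : T ∈ S := hTmax.1
    refine ⟨T, hTS.1, ?_, hTS.2, ?_⟩
    · -- countable
      have hpd : T.PairwiseDisjoint (fun t => ball t (σ / 2)) := by
        intro a ha b hb hab
        exact ball_disjoint_ball (by have := hTS.2 ha hb hab; linarith)
      exact hpd.countable_of_isOpen (fun t _ => isOpen_ball)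
        (fun t _ => ⟨t, mem_ball_self (by linarith)⟩)
    · intro x hx
      by_contra hcov
      push_neg at hcov
      have hxT : x ∉ T := fun hxT => absurd (hcov x hxT) (by simp [hσ])
      have hins : insert x T ∈ S := by
        constructor
        · exact insert_subset hx hTS.1
        · apply hTS.2.insert
          intro b hb _; exact ⟨hcov b hb, by rw [dist_comm]; exact hcov b hb⟩
      have := hTmax.2 hins (subset_insert x T)
      exact hxT (this (mem_insert x T))
  · intro c hcS hchain hcne
    refine ⟨⋃₀ c, ⟨?_, ?_⟩, fun s hs => subset_sUnion_of_mem hs⟩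
    · exact sUnion_subset fun s hs => (hcS hs).1
    · intro a ha b hb hab
      obtain ⟨sa, hsa, has⟩ := ha
      obtain ⟨sb, hsb, hbs⟩ := hb
      rcases hchain.total hsa hsb with h | h
      · exact (hcS hsb).2 (h has) hbs hab
      · exact (hcS hsa).2 has (h hbs) hab



lemma exists_normal {K : Set (E n)} (hK : Convex ℝ K) (hKne : K.Nonempty)
    {w : E n} (hw : w ∉ K) :
    ∃ q ν : E n, q ∈ closure K ∧ ‖ν‖ = 1 ∧
      (∀ k ∈ closure K, ⟪k - q, ν⟫ ≤ (0:ℝ)) ∧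
      w = q + (infDist w (closure K)) • ν := by
  have hcne : (closure K).Nonempty := hKne.closure
  have hcconv : Convex ℝ (closure K) := hK.closure
  by_cases hwc : w ∈ closure K
  · -- boundary case
    have hd0 : infDist w (closure K) = 0 := infDist_zero_of_mem hwc
    suffices h : ∃ ν : E n, ‖ν‖ = 1 ∧ ∀ k ∈ closure K, ⟪k - w, ν⟫ ≤ (0:ℝ) by
      obtain ⟨ν, hν1, hνs⟩ := h
      exact ⟨w, ν, hwc, hν1, hνs, by rw [hd0]; simp⟩
    by_cases hsp : affineSpan ℝ K = ⊤
    · -- full-dimensional: Hahn-Banach at w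
      obtain ⟨a₀, ha₀⟩ := (hK.interior_nonempty_iff_affineSpan_eq_top).2 hsp
      obtain ⟨f, hf⟩ := geometric_hahn_banach_open_point hK.interior isOpen_interior
        (fun h => hw (interior_subset h))
      have hfK : ∀ k ∈ K, f k ≤ f w := by
        intro k hk
        have hseg : ∀ t : ℝ, t ∈ Ioo (0:ℝ) 1 → t * f a₀ + (1 - t) * f k < f w := by
          intro t ht
          have hmem : t • a₀ + (1 - t) • k ∈ interior K := by
            apply hK.combo_interior_closure_subset_interior (a := t) (b := 1 - t)
              ht.1 (by linarith [ht.2]) (by ring)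
            exact Set.add_mem_add (smul_mem_smul_set ha₀)
              (smul_mem_smul_set (subset_closure hk))
          have := hf _ hmem
          simpa only [map_add, ContinuousLinearMap.map_smul, smul_eq_mul] using this
        have htend : Tendsto (fun t : ℝ => t * f a₀ + (1 - t) * f k) (𝓝[>] 0)
            (𝓝 (f k)) := by
          have hc : Continuous fun t : ℝ => t * f a₀ + (1 - t) * f k := by continuity
          have := (hc.tendsto 0).mono_left (nhdsWithin_le_nhds (s := Ioi (0:ℝ)))
          simpa using this
        refine le_of_tendsto htend ?_
        filter_upwards [Ioo_mem_nhdsGT_of_mem (Set.mem_Ico.2 ⟨le_refl (0:ℝ), one_pos⟩)]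
          with t ht
        exact (hseg t ht).le
      have hfc : ∀ k ∈ closure K, f k ≤ f w := fun k hk =>
        closure_minimal hfK (isClosed_le f.continuous continuous_const) hk
      set u : E n := (InnerProductSpace.toDual ℝ (E n)).symm f with hu
      have hinner : ∀ x : E n, ⟪u, x⟫ = f x := by
        intro x
        simp [hu, InnerProductSpace.toDual_symm_apply]
      have hune : u ≠ 0 := by
        intro h0
        have h1 := hinner a₀
        have h2 := hinner w
        rw [h0] at h1 h2
        simp only [inner_zero_left] at h1 h2
        have := hf a₀ ha₀
        rw [← h1, ← h2] at this
        exact lt_irrefl _ this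
      refine ⟨‖u‖⁻¹ • u, ?_, ?_⟩
      · rw [norm_smul]
        simp [norm_norm, abs_of_nonneg (inv_nonneg.2 (norm_nonneg u)),
          inv_mul_cancel₀ (norm_ne_zero_iff.2 hune)]
      · intro k hk
        rw [real_inner_smul_right]
        have : ⟪k - w, u⟫ = f k - f w := by
          rw [real_inner_comm, inner_sub_right, hinner k, hinner w]
        rw [this]
        have := hfc k hk
        have hpos : (0:ℝ) ≤ ‖u‖⁻¹ := inv_nonneg.2 (norm_nonneg u)
        nlinarith
    · -- degenerate: K in a proper affine subspace
      have hcl : closure K ⊆ (affineSpan ℝ K : Set (E n)) :=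
        closure_minimal (subset_affineSpan ℝ K)
          (affineSpan ℝ K).closed_of_finiteDimensional
      set V := (affineSpan ℝ K).direction with hV
      have hVne : V ≠ ⊤ := by
        intro htop
        apply hsp
        have hne : ((affineSpan ℝ K : Set (E n))).Nonempty :=
          hKne.mono (subset_affineSpan ℝ K)
        exact (AffineSubspace.direction_eq_top_iff_of_nonempty hne).1 htop
      have hOrth : Vᗮ ≠ ⊥ := by
        intro hbot
        exact hVne (Submodule.orthogonal_eq_bot_iff.1 hbot)
      obtain ⟨u, huV, hune⟩ := Submodule.exists_mem_ne_zero_of_ne_bot hOrth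
      refine ⟨‖u‖⁻¹ • u, ?_, ?_⟩
      · rw [norm_smul]
        simp [abs_of_nonneg (inv_nonneg.2 (norm_nonneg u)),
          inv_mul_cancel₀ (norm_ne_zero_iff.2 hune)]
      · intro k hk
        rw [real_inner_smul_right]
        have hkV : k - w ∈ V := by
          have := AffineSubspace.vsub_mem_direction (hcl hk) (hcl hwc)
          simpa using this
        have h0 : ⟪k - w, u⟫ = (0:ℝ) :=
          (Submodule.mem_orthogonal V u).1 huV _ hkV
        rw [h0, mul_zero]
  · -- projection case
    obtain ⟨v, hvK, hv⟩ := exists_norm_eq_iInf_of_complete_convex hcne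
      (isClosed_closure.isComplete) hcconv w
    have hsupp := (norm_eq_iInf_iff_real_inner_le_zero hcconv hvK).1 hv
    have hdeq : infDist w (closure K) = ‖w - v‖ := by
      apply le_antisymm
      · rw [← dist_eq_norm]
        exact infDist_le_dist_of_mem hvK
      · apply le_infDist' hcne
        intro y hy
        rw [hv, dist_eq_norm]
        exact ciInf_le ⟨0, fun b hb => by obtain ⟨z, rfl⟩ := hb; exact norm_nonneg _⟩
          (⟨y, hy⟩ : closure K)
    have hdpos : 0 < infDist w (closure K) :=
      (isClosed_closure.notMem_iff_infDist_pos hcne).1 hwc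
    have hnv : ‖w - v‖ ≠ 0 := by rw [← hdeq]; exact hdpos.ne'
    refine ⟨v, ‖w - v‖⁻¹ • (w - v), hvK, ?_, ?_, ?_⟩
    · rw [norm_smul]
      simp [abs_of_nonneg (inv_nonneg.2 (norm_nonneg _)), inv_mul_cancel₀ hnv]
    · intro k hk
      rw [real_inner_smul_right]
      have h1 := hsupp k hk
      have : ⟪k - v, w - v⟫ ≤ (0:ℝ) := by rwa [real_inner_comm]
      have hpos : (0:ℝ) ≤ ‖w - v‖⁻¹ := inv_nonneg.2 (norm_nonneg _)
      nlinarith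
    · rw [hdeq, smul_smul, mul_inv_cancel₀ hnv, one_smul]
      abel



def Qset (n : ℕ) : Set (E n) := {x | ∀ i, x i ∈ Icc (0:ℝ) 1}

lemma isClosed_Qset : IsClosed (Qset n) := by
  have : Qset n = ⋂ i, (fun x : E n => x i) ⁻¹' (Icc (0:ℝ) 1) := by
    ext x; simp [Qset]
  rw [this]
  exact isClosed_iInter fun i => isClosed_Icc.preimage (EuclideanSpace.proj i).continuous

lemma sqrt_n_pos (hn : 0 < n) : 0 < Real.sqrt n := Real.sqrt_pos.2 (by exact_mod_cast hn)

lemma le_of_sq_le_sq' {x z : ℝ} (hx : 0 ≤ x) (hz : 0 ≤ z) (h : x^2 ≤ z^2) : x ≤ z := by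
  nlinarith

lemma shell_bound (hn : 0 < n) (μ : Measure (E n)) {δ : ℝ} (hδ : 1 ≤ δ)
    (hdbl : DoublingWrt μ {C | IsAxisCube C} δ)
    {K : Set (E n)} (hK : Convex ℝ K) (hKne : K.Nonempty)
    {ε r : ℝ} (hε : 0 < ε) (hr : 2 * ε ≤ r) (A₀ : ℕ)
    (hA₀ : 28 * Real.sqrt n ≤ 2 ^ A₀) :
    ∃ G : Set (E n), IsOpen G ∧
      (∀ z ∈ G, r < infDist z (closure K) ∧ infDist z (closure K) ≤ 2 * r) ∧
      μ {x | infDist x (closure K) ≤ ε ∧ x ∉ K} ≤ (ENNReal.ofReal δ) ^ A₀ * μ G := by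
  set W : Set (E n) := {x | infDist x (closure K) ≤ ε ∧ x ∉ K} with hW
  have hcne : (closure K).Nonempty := hKne.closure
  set sn := Real.sqrt n with hsn
  have hsnpos : 0 < sn := sqrt_n_pos hn
  have hrpos : 0 < r := by linarith
  set sΓ : ℝ := (r - ε) / (2 * sn) with hsΓdef
  have hsΓpos : 0 < sΓ := by
    apply div_pos (by linarith) (by linarith)
  have hsnsΓ : sn * sΓ = (r - ε) / 2 := by
    rw [hsΓdef]; field_simp
  -- choice of projection data
  have hchoice : ∀ t : E n, ∃ p : E n × E n, t ∈ W →
      p.1 ∈ closure K ∧ ‖p.2‖ = 1 ∧ (∀ k ∈ closure K, ⟪k - p.1, p.2⟫ ≤ (0:ℝ)) ∧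
      t = p.1 + infDist t (closure K) • p.2 := by
    intro t
    by_cases ht : t ∈ W
    · obtain ⟨q, ν, h1, h2, h3, h4⟩ := exists_normal hK hKne ht.2
      exact ⟨(q, ν), fun _ => ⟨h1, h2, h3, h4⟩⟩
    · exact ⟨(0, 0), fun h => absurd h ht⟩
  choose P hP using hchoice
  set q : E n → E n := fun t => (P t).1 with hqdef
  set ν : E n → E n := fun t => (P t).2 with hνdef
  set d : E n → ℝ := fun t => infDist t (closure K) with hddef
  set y : E n → E n := fun t => q t + (3/2 * r) • ν t with hydef
  set Γ : E n → Set (E n) := fun t => oc (y t) sΓ with hΓdef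
  -- basic facts for t ∈ W
  have hqK : ∀ t ∈ W, q t ∈ closure K := fun t ht => (hP t ht).1
  have hν1 : ∀ t ∈ W, ‖ν t‖ = 1 := fun t ht => (hP t ht).2.1
  have hsupp : ∀ t ∈ W, ∀ k ∈ closure K, ⟪k - q t, ν t⟫ ≤ (0:ℝ) :=
    fun t ht => (hP t ht).2.2.1
  have heq : ∀ t ∈ W, t = q t + d t • ν t := fun t ht => (hP t ht).2.2.2
  have hd0 : ∀ t : E n, 0 ≤ d t := fun t => infDist_nonneg
  have hdε : ∀ t ∈ W, d t ≤ ε := fun t ht => ht.1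
  have hdisttq : ∀ t ∈ W, dist t (q t) = d t := by
    intro t ht
    rw [dist_eq_norm]
    nth_rewrite 1 [heq t ht]
    simp only [add_sub_cancel_left, norm_smul, Real.norm_eq_abs,
      abs_of_nonneg (hd0 t), hν1 t ht, mul_one]
  have hdistqy : ∀ t ∈ W, dist (q t) (y t) = 3/2 * r := by
    intro t ht
    rw [dist_eq_norm, hydef]
    simp only [sub_add_cancel_left, norm_neg, norm_smul, Real.norm_eq_abs,
      abs_of_nonneg (by linarith : (0:ℝ) ≤ 3/2 * r), hν1 t ht, mul_one]
  have hinfy : ∀ t ∈ W, 3/2 * r ≤ infDist (y t) (closure K) := by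
    intro t ht
    apply le_infDist' hcne
    intro k hk
    rw [dist_eq_norm]
    have hYk : y t - k = (q t - k) + (3/2*r) • ν t := by
      simp only [hydef]; module
    have hexp : ‖y t - k‖^2 = ‖q t - k‖^2 + 2*(3/2*r)*⟪q t - k, ν t⟫ + (3/2*r)^2 := by
      rw [hYk, norm_add_sq_real, real_inner_smul_right, norm_smul, Real.norm_eq_abs,
        abs_of_nonneg (by linarith : (0:ℝ) ≤ 3/2 * r), hν1 t ht]
      ring
    have hip : 0 ≤ ⟪q t - k, ν t⟫ := by
      have h1 := hsupp t ht k hk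
      have h2 : q t - k = -(k - q t) := by abel
      rw [h2, inner_neg_left]
      linarith
    have hcross : 0 ≤ 2*(3/2*r)*⟪q t - k, ν t⟫ := by
      apply mul_nonneg (by linarith) hip
    have hsq : (3/2*r)^2 ≤ ‖y t - k‖^2 := by
      rw [hexp]
      have := sq_nonneg (‖q t - k‖)
      linarith
    exact le_of_sq_le_sq' (by linarith) (norm_nonneg _) hsq
  have hysep : ∀ t ∈ W, ∀ t' ∈ W, r ≤ dist t t' → sn * sΓ ≤ dist (y t) (y t') := by
    intro t ht t' ht' hsep
    set a := ‖q t' - q t‖ with hadef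
    set b := ‖ν t' - ν t‖ with hbdef
    have ha0 : 0 ≤ a := norm_nonneg _
    have hb0 : 0 ≤ b := norm_nonneg _
    have hip : 0 ≤ ⟪q t' - q t, ν t' - ν t⟫ := by
      have h1 := hsupp t ht (q t') (hqK t' ht')
      have h2 := hsupp t' ht' (q t) (hqK t ht)
      have h3 : ⟪q t' - q t, ν t' - ν t⟫ = ⟪q t' - q t, ν t'⟫ - ⟪q t' - q t, ν t⟫ := by
        rw [inner_sub_right]
      have h4 : ⟪q t' - q t, ν t'⟫ = - ⟪q t - q t', ν t'⟫ := by
        rw [show q t' - q t = -(q t - q t') by abel, inner_neg_left]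
      linarith
    have hyexp : ‖y t' - y t‖^2
        = a^2 + 2*(3/2*r)*⟪q t' - q t, ν t' - ν t⟫ + (3/2*r)^2 * b^2 := by
      have hY : y t' - y t = (q t' - q t) + (3/2*r) • (ν t' - ν t) := by
        simp only [hydef]; module
      rw [hY, norm_add_sq_real, real_inner_smul_right, norm_smul, Real.norm_eq_abs,
        abs_of_nonneg (by linarith : (0:ℝ) ≤ 3/2 * r), hadef, hbdef]
      ring
    have htt : dist t t' ≤ a + ε * b + ε := by
      have hT : t' - t = (q t' - q t) + d t' • (ν t' - ν t) + (d t' - d t) • ν t := by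
        calc t' - t = (q t' + d t' • ν t') - (q t + d t • ν t) := by
              rw [← heq t ht, ← heq t' ht']
          _ = (q t' - q t) + d t' • (ν t' - ν t) + (d t' - d t) • ν t := by
              module
      rw [dist_comm, dist_eq_norm, hT]
      have e1 : ‖d t' • (ν t' - ν t)‖ ≤ ε * b := by
        rw [norm_smul, Real.norm_eq_abs, abs_of_nonneg (hd0 t')]
        exact mul_le_mul_of_nonneg_right (hdε t' ht') hb0
      have e2 : ‖(d t' - d t) • ν t‖ ≤ ε := by
        rw [norm_smul, Real.norm_eq_abs, hν1 t ht, mul_one]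
        rw [abs_le]
        constructor
        · have := hd0 t; have := hdε t' ht'; have := hd0 t'; have := hdε t ht; linarith
        · have := hd0 t; have := hdε t' ht'; linarith
      calc ‖q t' - q t + d t' • (ν t' - ν t) + (d t' - d t) • ν t‖
          ≤ ‖q t' - q t‖ + ‖d t' • (ν t' - ν t)‖ + ‖(d t' - d t) • ν t‖ := norm_add₃_le
        _ ≤ a + ε * b + ε := by rw [← hadef]; linarith
    have hab : r - ε ≤ a + ε * b := by linarith
    have hNnorm : dist (y t) (y t') = ‖y t' - y t‖ := by
      rw [dist_comm, dist_eq_norm]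
    rw [hNnorm, hsnsΓ]
    have hN0 : 0 ≤ ‖y t' - y t‖ := norm_nonneg _
    have hcross : 0 ≤ 2*(3/2*r)*⟪q t' - q t, ν t' - ν t⟫ :=
      mul_nonneg (by linarith) hip
    rcases le_or_gt ((r - ε)/2) a with hcase | hcase
    · have hsq : a^2 ≤ ‖y t' - y t‖^2 := by
        rw [hyexp]
        have h5 : 0 ≤ (3/2*r)^2 * b^2 := by positivity
        linarith
      have := le_of_sq_le_sq' ha0 hN0 hsq
      linarith
    · have hbb : (r - ε)/2 ≤ ε * b := by linarith
      have hsq : (3/2*r*b)^2 ≤ ‖y t' - y t‖^2 := by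
        rw [hyexp]
        have h5 : 0 ≤ a^2 := sq_nonneg a
        have h6 : (3/2*r*b)^2 = (3/2*r)^2 * b^2 := by ring
        linarith
      have h7 := le_of_sq_le_sq' (by positivity) hN0 hsq
      have h32 : ε * b ≤ 3/2*r*b := by nlinarith
      linarith
  obtain ⟨T, hTW, hTc, hTsep, hTcov⟩ := exists_maximal_separated W hrpos
  have hdisj : T.PairwiseDisjoint Γ := by
    intro t ht t' ht' hne
    have hy := hysep t (hTW ht) t' (hTW ht') (hTsep ht ht' hne)
    rw [Function.onFun, Set.disjoint_left]
    intro z hzt hzt'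
    have hlt : dist (y t) (y t') < sn * sΓ := by
      apply dist_lt_sqrt_mul hn
      intro i
      calc |y t i - y t' i| ≤ |y t i - z i| + |z i - y t' i| := abs_sub_le _ _ _
        _ < sΓ/2 + sΓ/2 := by
            apply add_lt_add
            · rw [abs_sub_comm]; exact hzt i
            · exact hzt' i
        _ = sΓ := by ring
    linarith
  refine ⟨⋃ t ∈ T, Γ t, isOpen_biUnion fun t _ => isOpen_oc _ _, ?_, ?_⟩
  · intro z hz
    obtain ⟨t, ht, hzt⟩ := mem_iUnion₂.1 hz
    have htW := hTW ht
    have hzy : dist z (y t) ≤ (r - ε)/4 := by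
      have hco : ∀ i, |z i - y t i| ≤ sΓ/2 := fun i => (hzt i).le
      calc dist z (y t) ≤ sn * (sΓ/2) := dist_le_sqrt_mul z (y t) (by linarith) hco
        _ = (r - ε)/4 := by
            rw [show sn * (sΓ/2) = (sn*sΓ)/2 by ring, hsnsΓ]; ring
    constructor
    · have h1 : infDist (y t) (closure K) ≤ infDist z (closure K) + dist (y t) z :=
        infDist_le_infDist_add_dist
      have h2 := hinfy t htW
      have h3 : dist (y t) z ≤ (r-ε)/4 := by rw [dist_comm]; exact hzy
      linarith
    · have h1 : infDist z (closure K) ≤ dist z (q t) := infDist_le_dist_of_mem (hqK t htW)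
      have h2 : dist z (q t) ≤ dist z (y t) + dist (y t) (q t) := dist_triangle _ _ _
      have h3 : dist (y t) (q t) = 3/2*r := by rw [dist_comm]; exact hdistqy t htW
      linarith
  · have hWsub : W ⊆ ⋃ t ∈ T, (W ∩ ball t r) := by
      intro x hx
      obtain ⟨t, htT, hxt⟩ := hTcov x hx
      exact mem_biUnion htT ⟨hx, mem_ball.2 hxt⟩
    have hside : 7 * r ≤ 2^A₀ * sΓ := by
      have h1 : 28 * sn * sΓ ≤ 2^A₀ * sΓ :=
        mul_le_mul_of_nonneg_right hA₀ hsΓpos.le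
      have h2 : 28 * sn * sΓ = 14 * (r - ε) := by
        rw [show 28 * sn * sΓ = 28 * (sn * sΓ) by ring, hsnsΓ]; ring
      linarith
    have hcover : ∀ t ∈ T, W ∩ ball t r ⊆ oc (y t) (2^A₀ * sΓ) := by
      intro t htT z hz
      have htW := hTW htT
      have hzy : dist z (y t) < 3 * r := by
        calc dist z (y t) ≤ dist z t + dist t (q t) + dist (q t) (y t) :=
              dist_triangle4 z t (q t) (y t)
          _ < r + ε + 3/2*r := by
              have hb : dist z t < r := mem_ball.1 hz.2
              have hq' : dist t (q t) ≤ ε := by rw [hdisttq t htW]; exact hdε t htW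
              have hy' : dist (q t) (y t) = 3/2*r := hdistqy t htW
              linarith
          _ ≤ 3 * r := by linarith
      intro i
      calc |z i - y t i| ≤ dist z (y t) := coord_le_dist z (y t) i
        _ < 3 * r := hzy
        _ ≤ (2^A₀ * sΓ)/2 := by linarith
    calc μ W ≤ μ (⋃ t ∈ T, (W ∩ ball t r)) := measure_mono hWsub
      _ ≤ ∑' t : T, μ (W ∩ ball (↑t) r) := measure_biUnion_le μ hTc _
      _ ≤ ∑' t : T, (ENNReal.ofReal δ)^A₀ * μ (Γ (↑t)) := by
          apply ENNReal.tsum_le_tsum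
          intro t
          calc μ (W ∩ ball (↑t) r) ≤ μ (oc (y ↑t) (2^A₀ * sΓ)) :=
              measure_mono (hcover ↑t t.2)
            _ ≤ (ENNReal.ofReal δ)^A₀ * μ (oc (y ↑t) sΓ) := dbl_chain hdbl _ hsΓpos A₀
      _ = (ENNReal.ofReal δ)^A₀ * ∑' t : T, μ (Γ (↑t)) := ENNReal.tsum_mul_left
      _ = (ENNReal.ofReal δ)^A₀ * μ (⋃ t ∈ T, Γ t) := by
          congr 1
          exact (measure_biUnion hTc hdisj
            (fun t ht => (isOpen_oc _ _).measurableSet)).symm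


lemma core (hn : 0 < n) (μ : Measure (E n)) {δ : ℝ} (hδ : 1 ≤ δ)
    (hdbl : DoublingWrt μ {C | IsAxisCube C} δ)
    {K : Set (E n)} (hK : Convex ℝ K) (hKne : K.Nonempty) (hKQ : K ⊆ Qset n)
    {ε : ℝ} (hε : 0 < ε) (M A₀ : ℕ) (hεM : ε * 2 ^ M ≤ 1)
    (hA₀ : 28 * Real.sqrt n ≤ 2 ^ A₀) :
    (M : ℝ≥0∞) * μ {x | infDist x (closure K) ≤ ε ∧ x ∉ K}
      ≤ (ENNReal.ofReal δ) ^ (A₀ + 3) * μ (Qset n) := by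
  set W : Set (E n) := {x | infDist x (closure K) ≤ ε ∧ x ∉ K} with hW
  have hcne : (closure K).Nonempty := hKne.closure
  have hKQc : closure K ⊆ Qset n := closure_minimal hKQ isClosed_Qset
  have hsel : ∀ j : ℕ, ∃ G : Set (E n), 1 ≤ j → (IsOpen G ∧
      (∀ z ∈ G, ε*2^j < infDist z (closure K) ∧ infDist z (closure K) ≤ 2*(ε*2^j)) ∧
      μ W ≤ (ENNReal.ofReal δ) ^ A₀ * μ G) := by
    intro j
    by_cases hj : 1 ≤ j
    · have hr : 2 * ε ≤ ε * 2^j := by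
        have : (2:ℝ) ≤ 2^j := by
          calc (2:ℝ) = 2^1 := by norm_num
            _ ≤ 2^j := by
              apply pow_le_pow_right₀ (by norm_num) hj
        nlinarith
      obtain ⟨G, h1, h2, h3⟩ := shell_bound hn μ hδ hdbl hK hKne hε hr A₀ hA₀
      exact ⟨G, fun _ => ⟨h1, h2, h3⟩⟩
    · exact ⟨∅, fun h => absurd h hj⟩
  choose G hG using hsel
  set c7 : E n := WithLp.toLp 2 (fun _ => (1/2 : ℝ)) with hc7
  have hc7i : ∀ i : Fin n, c7 i = 1/2 := fun i => rfl
  -- G j inside the big cube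
  have hGbig : ∀ j ∈ Finset.Icc 1 M, G j ⊆ oc c7 7 := by
    intro j hjmem z hz
    obtain ⟨hj1, hjM⟩ := Finset.mem_Icc.1 hjmem
    have hwin := (hG j hj1).2.1 z hz
    have h2j : ε * 2^j ≤ 1 := by
      have : (2:ℝ)^j ≤ 2^M := by
        apply pow_le_pow_right₀ (by norm_num) hjM
      nlinarith
    have hlt : infDist z (closure K) < 5/2 := by linarith [hwin.2]
    obtain ⟨k, hk, hdk⟩ := (infDist_lt_iff hcne).1 hlt
    intro i
    have h1 : |z i - k i| ≤ dist z k := coord_le_dist z k i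
    have h2 : k i ∈ Icc (0:ℝ) 1 := hKQc hk i
    have h3 : |z i - c7 i| ≤ |z i - k i| + |k i - c7 i| := abs_sub_le _ _ _
    have h4 : |k i - c7 i| ≤ 1/2 := by
      rw [hc7i i, abs_le]
      constructor <;> [linarith [h2.1]; linarith [h2.2]]
    have : |z i - c7 i| < 3 := by linarith
    linarith
  -- pairwise disjointness of the shells
  have hkey : ∀ i j : ℕ, 1 ≤ i → 1 ≤ j → i < j → Disjoint (G i) (G j) := by
    intro i j hi1 hj1 hlt
    rw [Set.disjoint_left]
    intro z hzi hzj
    have h1 := (hG i hi1).2.1 z hzi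
    have h2 := (hG j hj1).2.1 z hzj
    have : 2*(ε*2^i) ≤ ε*2^j := by
      have : (2:ℝ)^(i+1) ≤ 2^j := by
        apply pow_le_pow_right₀ (by norm_num) (by omega)
      rw [pow_succ] at this
      nlinarith
    linarith [h1.2, h2.1]
  have hdisj : (↑(Finset.Icc 1 M) : Set ℕ).PairwiseDisjoint G := by
    intro i hi j hj hij
    simp only [Finset.coe_Icc, mem_Icc] at hi hj
    rcases lt_or_gt_of_ne hij with h | h
    · exact hkey i j hi.1 hj.1 h
    · exact (hkey j i hj.1 hi.1 h).symm
  -- main computation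
  have hsum : (M : ℝ≥0∞) * μ W = ∑ j ∈ Finset.Icc 1 M, μ W := by
    rw [Finset.sum_const, Nat.card_Icc]
    simp [nsmul_eq_mul]
  rw [hsum]
  calc ∑ j ∈ Finset.Icc 1 M, μ W
      ≤ ∑ j ∈ Finset.Icc 1 M, (ENNReal.ofReal δ) ^ A₀ * μ (G j) := by
        apply Finset.sum_le_sum
        intro j hjmem
        exact (hG j (Finset.mem_Icc.1 hjmem).1).2.2
    _ = (ENNReal.ofReal δ) ^ A₀ * ∑ j ∈ Finset.Icc 1 M, μ (G j) := by
        rw [Finset.mul_sum]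
    _ = (ENNReal.ofReal δ) ^ A₀ * μ (⋃ j ∈ Finset.Icc 1 M, G j) := by
        congr 1
        exact (measure_biUnion_finset hdisj
          (fun j hjmem => ((hG j (Finset.mem_Icc.1 hjmem).1).1).measurableSet)).symm
    _ ≤ (ENNReal.ofReal δ) ^ A₀ * μ (oc c7 7) := by
        apply mul_le_mul_right
        apply measure_mono
        exact iUnion₂_subset hGbig
    _ ≤ (ENNReal.ofReal δ) ^ A₀ * ((ENNReal.ofReal δ) ^ 3 * μ (oc c7 (7/8))) := by
        apply mul_le_mul_right
        have h7 : (7:ℝ) = 2^3 * (7/8) := by norm_num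
        calc μ (oc c7 7) = μ (oc c7 (2^3 * (7/8))) := by rw [← h7]
          _ ≤ (ENNReal.ofReal δ) ^ 3 * μ (oc c7 (7/8)) := dbl_chain hdbl _ (by norm_num) 3
    _ ≤ (ENNReal.ofReal δ) ^ (A₀ + 3) * μ (Qset n) := by
        rw [pow_add, mul_assoc]
        apply mul_le_mul_right
        apply mul_le_mul_right
        apply measure_mono
        intro x hx i
        have := hx i
        rw [hc7i i, abs_lt] at this
        constructor <;> [linarith [this.1]; linarith [this.2]]


lemma convex_Qset : Convex ℝ (Qset n) := by
  have h : Qset n = ⋂ i, (EuclideanSpace.proj (𝕜 := ℝ) i) ⁻¹' (Icc (0:ℝ) 1) := by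
    ext x; simp [Qset, EuclideanSpace.proj]
  rw [h]
  exact convex_iInter fun i =>
    (convex_Icc (0:ℝ) 1).linear_preimage (EuclideanSpace.projₗ i)

lemma isCompact_Qset : IsCompact (Qset n) := by
  apply Metric.isCompact_of_isClosed_isBounded isClosed_Qset
  have h : Qset n ⊆ closedBall 0 (Real.sqrt n * 1) := by
    intro x hx
    rw [mem_closedBall]
    apply dist_le_sqrt_mul x 0 zero_le_one
    intro i
    have h1 := hx i
    have h0 : (0 : E n) i = 0 := rfl
    rw [h0, abs_le, sub_zero]
    exact ⟨by linarith [h1.1], h1.2⟩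
  exact (isBounded_closedBall).subset h

lemma null_of_nat_mul_le {a C : ℝ≥0∞} (hC : C ≠ ⊤) (h : ∀ N : ℕ, (N:ℝ≥0∞) * a ≤ C) :
    a = 0 := by
  by_contra ha
  obtain ⟨N, hN⟩ := ENNReal.exists_nat_gt (ENNReal.div_lt_top hC ha).ne
  have h2 := h N
  rw [← ENNReal.le_div_iff_mul_le (Or.inl ha) (Or.inr hC)] at h2
  exact absurd hN (not_lt.2 h2)

lemma slice_null (hn : 0 < n) (μ : Measure (E n)) {δ : ℝ} (hδ : 1 ≤ δ)
    (hdbl : DoublingWrt μ {C | IsAxisCube C} δ) (hQfin : μ (Qset n) ≠ ⊤)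
    (i₀ : Fin n) {c : ℝ} (hc0 : 0 ≤ c) (hc1 : c ≤ 1) :
    μ {x | x ∈ Qset n ∧ x i₀ = c} = 0 := by
  obtain ⟨a, b, s, t₀, ht₀, hab, hcab, hs, hgood⟩ :
      ∃ a b s t₀ : ℝ, 0 < t₀ ∧ a < b ∧ c ∉ Ioo a b ∧ |s| = 1 ∧
        ∀ t : ℝ, 0 < t → t ≤ t₀ →
          (a < c + t*s ∧ c + t*s < b ∧ 0 ≤ c + t*s ∧ c + t*s ≤ 1) := by
    rcases eq_or_lt_of_le hc0 with hc | hc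
    · refine ⟨0, 1, 1, 1/2, by norm_num, by norm_num, by simp [← hc], by norm_num, ?_⟩
      intro t ht1 ht2
      rw [← hc]
      simp only [mul_one, zero_add]
      exact ⟨ht1, by linarith, by linarith, by linarith⟩
    · refine ⟨c - 1, c, -1, min c 1 / 2, by positivity, by linarith, by simp, by norm_num, ?_⟩
      intro t ht1 ht2
      have hmc : min c 1 ≤ c := min_le_left _ _
      have hm1 : min c 1 ≤ 1 := min_le_right _ _
      constructor
      · nlinarith
      constructor
      · nlinarith
      constructor
      · nlinarith
      · nlinarith
  set K' : Set (E n) := {x | (∀ i, x i ∈ Icc (0:ℝ) 1) ∧ x i₀ ∈ Ioo a b} with hK'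
  have hK'Q : K' ⊆ Qset n := fun x hx => hx.1
  have hK'conv : Convex ℝ K' := by
    have h : K' = Qset n ∩ (EuclideanSpace.proj (𝕜 := ℝ) i₀) ⁻¹' (Ioo a b) := by
      ext x; simp [hK', Qset, EuclideanSpace.proj]
    rw [h]
    exact convex_Qset.inter ((convex_Ioo a b).linear_preimage (EuclideanSpace.projₗ i₀))
  -- a canonical point of K'
  have hK'ne : K'.Nonempty := by
    refine ⟨(WithLp.toLp 2 (fun i => if i = i₀ then c + t₀*s else 1/2) : E n), ?_, ?_⟩
    · intro i
      by_cases hi : i = i₀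
      · have hg := hgood t₀ ht₀ le_rfl
        simp only [WithLp.ofLp_toLp, hi, if_pos rfl]
        exact ⟨hg.2.2.1, hg.2.2.2⟩
      · simp only [WithLp.ofLp_toLp, if_neg hi]
        norm_num
    · have hg := hgood t₀ ht₀ le_rfl
      simp only [WithLp.ofLp_toLp, if_pos rfl]
      exact ⟨hg.1, hg.2.1⟩
  -- slice is in the closure of K' minus K'
  have hsl : ∀ ε : ℝ, 0 < ε →
      {x | x ∈ Qset n ∧ x i₀ = c} ⊆ {x | infDist x (closure K') ≤ ε ∧ x ∉ K'} := by
    intro ε hε x hx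
    constructor
    · have hclos : x ∈ closure K' := by
        rw [Metric.mem_closure_iff]
        intro ε' hε'
        set t := min t₀ (ε'/2) with htdef
        have htpos : 0 < t := lt_min ht₀ (by linarith)
        have htle : t ≤ t₀ := min_le_left _ _
        have hg := hgood t htpos htle
        refine ⟨x + (t*s) • EuclideanSpace.single i₀ (1:ℝ), ⟨?_, ?_⟩, ?_⟩
        · intro i
          by_cases hi : i = i₀
          · subst hi
            have : (x + (t*s) • EuclideanSpace.single i (1:ℝ)) i = c + t*s := by
              simp [EuclideanSpace.single_apply, hx.2]
            rw [this]
            exact ⟨hg.2.2.1, hg.2.2.2⟩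
          · have : (x + (t*s) • EuclideanSpace.single i₀ (1:ℝ)) i = x i := by
              simp [EuclideanSpace.single_apply, hi]
            rw [this]
            exact hx.1 i
        · have : (x + (t*s) • EuclideanSpace.single i₀ (1:ℝ)) i₀ = c + t*s := by
            simp [EuclideanSpace.single_apply, hx.2]
          rw [this]
          exact ⟨hg.1, hg.2.1⟩
        · rw [dist_eq_norm]
          simp only [sub_add_cancel_left, norm_neg, norm_smul, Real.norm_eq_abs]
          rw [EuclideanSpace.norm_single, abs_mul, hs, norm_one]
          rw [abs_of_pos htpos]
          have : t ≤ ε'/2 := min_le_right _ _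
          linarith
      rw [infDist_zero_of_mem hclos]
      exact hε.le
    · intro hxK'
      exact hcab (hx.2 ▸ hxK'.2)
  -- apply core at every scale
  obtain ⟨A₀, hA₀⟩ := pow_unbounded_of_one_lt (28 * Real.sqrt n) (one_lt_two (α := ℝ))
  have hmain : ∀ N : ℕ, (N : ℝ≥0∞) * μ {x | x ∈ Qset n ∧ x i₀ = c}
      ≤ (ENNReal.ofReal δ) ^ (A₀ + 3) * μ (Qset n) := by
    intro N
    have hεp : (0:ℝ) < (1/2)^N := by positivity
    have hεM : ((1:ℝ)/2)^N * 2^N ≤ 1 := by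
      rw [← mul_pow]
      norm_num
    calc (N : ℝ≥0∞) * μ {x | x ∈ Qset n ∧ x i₀ = c}
        ≤ (N : ℝ≥0∞) * μ {x | infDist x (closure K') ≤ (1/2)^N ∧ x ∉ K'} :=
          mul_le_mul_right (measure_mono (hsl _ hεp)) _
      _ ≤ (ENNReal.ofReal δ) ^ (A₀ + 3) * μ (Qset n) :=
          core hn μ hδ hdbl hK'conv hK'ne hK'Q hεp N A₀ hεM hA₀.le
  apply null_of_nat_mul_le ?_ hmain
  exact ENNReal.mul_ne_top (by simp [ENNReal.pow_ne_top, ENNReal.ofReal_ne_top]) hQfin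

lemma cover (hn : 0 < n) (m : ℕ) (K : Set (E n)) :
    Qset n ⊆ (⋃ (j : Fin n → ℤ) (_ : ∀ i, 0 ≤ j i ∧ j i < 2 ^ m)
        (_ : Disjoint {x : E n | ∀ i, (j i : ℝ) * 2 ^ (-(m : ℤ)) < x i ∧
            x i < ((j i : ℝ) + 1) * 2 ^ (-(m : ℤ))} K),
        {x : E n | ∀ i, (j i : ℝ) * 2 ^ (-(m : ℤ)) < x i ∧
            x i < ((j i : ℝ) + 1) * 2 ^ (-(m : ℤ))})
      ∪ K
      ∪ {x | (∃ z ∈ K, dist x z ≤ Real.sqrt n * 2 ^ (-(m:ℤ))) ∧ x ∉ K}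
      ∪ (⋃ (i : Fin n), ⋃ (k : ℕ),
          {x | x ∈ Qset n ∧ k ≤ 2^m ∧ x i = (k:ℝ) * 2^(-(m:ℤ))}) := by
  intro x hxQ
  have h2m : (0:ℝ) < 2^(-(m:ℤ)) := by positivity
  have h2mnat : (0:ℝ) < 2^(m:ℕ) := by positivity
  by_cases hg : x ∈ ⋃ (i : Fin n), ⋃ (k : ℕ),
      {x : E n | x ∈ Qset n ∧ k ≤ 2^m ∧ x i = (k:ℝ) * 2^(-(m:ℤ))}
  · exact Or.inr hg
  by_cases hK : x ∈ K
  · exact Or.inl (Or.inl (Or.inr hK))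
  by_cases hW : (∃ z ∈ K, dist x z ≤ Real.sqrt n * 2 ^ (-(m:ℤ)))
  · exact Or.inl (Or.inr ⟨hW, hK⟩)
  apply Or.inl; apply Or.inl; apply Or.inl
  -- construct the dyadic index
  have hxint : ∀ i : Fin n, ∃ k : ℤ, 0 ≤ k ∧ k < 2^m ∧
      (k:ℝ)*2^(-(m:ℤ)) < x i ∧ x i < ((k:ℝ)+1)*2^(-(m:ℤ)) := by
    intro i
    have hx01 := hxQ i
    set t : ℝ := x i * 2^(m:ℕ) with htdef
    have hrepr : x i = t * 2^(-(m:ℤ)) := by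
      rw [htdef, zpow_neg, zpow_natCast]
      field_simp
    have hnotint : ∀ k : ℕ, k ≤ 2^m → t ≠ (k:ℝ) := by
      intro k hk hkt
      apply hg
      refine mem_iUnion.2 ⟨i, mem_iUnion.2 ⟨k, ⟨hxQ, hk, ?_⟩⟩⟩
      rw [hrepr, hkt]
    have ht0 : 0 ≤ t := mul_nonneg hx01.1 (by positivity)
    have ht2m : t ≤ 2^(m:ℕ) := by nlinarith [hx01.2]
    have htlt : t < 2^(m:ℕ) := lt_of_le_of_ne ht2m (by exact_mod_cast hnotint (2^m) le_rfl)
    refine ⟨⌊t⌋, Int.floor_nonneg.2 ht0, ?_, ?_, ?_⟩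
    · rw [show ((2:ℤ)^m) = ((2^m : ℕ) : ℤ) by push_cast; ring]
      apply Int.floor_lt.2
      push_cast
      exact htlt
    · have hne : ((⌊t⌋:ℝ)) ≠ t := by
        intro hbad
        have hk0 : 0 ≤ ⌊t⌋ := Int.floor_nonneg.2 ht0
        have hkle : ⌊t⌋.toNat ≤ 2^m := by
          have h1 : (⌊t⌋ : ℝ) ≤ 2^(m:ℕ) := by rw [hbad]; exact ht2m
          have h2 : ⌊t⌋ ≤ ((2^m : ℕ) : ℤ) := by exact_mod_cast h1
          omega
        apply hnotint ⌊t⌋.toNat hkle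
        rw [show ((⌊t⌋.toNat : ℕ) : ℝ) = ((⌊t⌋ : ℤ) : ℝ) from by
          exact_mod_cast congrArg (Int.cast : ℤ → ℝ) (Int.toNat_of_nonneg hk0)]
        exact hbad.symm
      have hlt : (⌊t⌋:ℝ) < t := lt_of_le_of_ne (Int.floor_le t) hne
      rw [hrepr]
      exact mul_lt_mul_of_pos_right hlt h2m
    · have hlt := Int.lt_floor_add_one t
      rw [hrepr]
      apply mul_lt_mul_of_pos_right ?_ h2m
      exact_mod_cast hlt
  choose jf hj0 hj2 hjl hjr using hxint
  apply mem_iUnion.2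
  refine ⟨jf, ?_⟩
  apply mem_iUnion.2
  refine ⟨fun i => ⟨hj0 i, hj2 i⟩, ?_⟩
  apply mem_iUnion.2
  refine ⟨?_, fun i => ⟨hjl i, hjr i⟩⟩
  rw [Set.disjoint_left]
  intro z hz1 hz2
  apply hW
  refine ⟨z, hz2, ?_⟩
  apply dist_le_sqrt_mul x z h2m.le
  intro i
  have h1 := hjl i
  have h2 := hjr i
  have h3 := (hz1 i).1
  have h4 := (hz1 i).2
  rw [abs_le]
  constructor <;> nlinarith

end S15


set_option maxHeartbeats 2000000

/-- Corollary to Lemma `l.weighted` of the paper. Let `K` be a convex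
subset of the unit cube `Q = [0,1]ⁿ`, `μ` doubling with constant `δ` with respect to
axis-parallel cubes, and let `m ≥ 1` with `√n·2^{-m} < 1`. If `U` is the union of the
dyadic subcubes of `Q` of sidelength `2^{-m}` which are disjoint from `K`, then
`μ(U) + μ(K) ≥ ξ_m·μ(Q)` with
`ξ_m = 1 - 9·δ^{4+⌈log₂(34√n)⌉}·(log₂(2^m/√n))⁻¹`; moreover `ξ_m → 1` as `m → ∞`. -/
theorem statement15 (n : ℕ) (μ : Measure (EuclideanSpace ℝ (Fin n)))
    (hloc : IsLocallyFiniteMeasure μ) (hμ : μ ≠ 0)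
    (δ : ℝ) (hδ : 1 < δ) (hdbl : DoublingWrt μ {C | IsAxisCube C} δ)
    (K : Set (EuclideanSpace ℝ (Fin n))) (hK : Convex ℝ K)
    (hKQ : K ⊆ {x | ∀ i, x i ∈ Set.Icc (0 : ℝ) 1})
    (m : ℕ) (hm : 0 < m) (hsmall : Real.sqrt n * (2 : ℝ) ^ (-(m : ℤ)) < 1)
    (ξ : ℕ → ℝ)
    (hξ : ∀ j : ℕ, ξ j =
      1 - 9 * δ ^ ((4 : ℤ) + ⌈Real.logb 2 (34 * Real.sqrt n)⌉) *
        (Real.logb 2 ((2 : ℝ) ^ j / Real.sqrt n))⁻¹) :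
    ENNReal.ofReal (ξ m) * μ {x | ∀ i, x i ∈ Set.Icc (0 : ℝ) 1}
      ≤ μ (⋃ (j : Fin n → ℤ) (_ : ∀ i, 0 ≤ j i ∧ j i < 2 ^ m)
            (_ : Disjoint
              {x : EuclideanSpace ℝ (Fin n) |
                ∀ i, (j i : ℝ) * 2 ^ (-(m : ℤ)) < x i ∧
                  x i < ((j i : ℝ) + 1) * 2 ^ (-(m : ℤ))} K),
            {x : EuclideanSpace ℝ (Fin n) |
              ∀ i, (j i : ℝ) * 2 ^ (-(m : ℤ)) < x i ∧
                x i < ((j i : ℝ) + 1) * 2 ^ (-(m : ℤ))}) + μ K ∧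
    Tendsto ξ atTop (𝓝 1) := by

  haveI := hloc
  have hQQ : {x : EuclideanSpace ℝ (Fin n) | ∀ i, x i ∈ Set.Icc (0 : ℝ) 1}
      = S15.Qset n := rfl
  constructor
  · -- the measure inequality
    rcases Nat.eq_zero_or_pos n with hn0 | hn
    · -- n = 0 : the space is a single point
      subst hn0
      have hξm : ξ m = 1 := by
        rw [hξ m]
        norm_num [Real.sqrt_zero, Real.logb_zero]
      have hQuniv : {x : EuclideanSpace ℝ (Fin 0) | ∀ i, x i ∈ Set.Icc (0 : ℝ) 1}
          = univ := eq_univ_of_forall (fun x i => i.elim0)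
      rw [hξm, ENNReal.ofReal_one, one_mul, hQuniv]
      rcases eq_empty_or_nonempty K with hK0 | hKne
      · subst hK0
        have hU : univ ⊆ ⋃ (j : Fin 0 → ℤ) (_ : ∀ i, 0 ≤ j i ∧ j i < 2 ^ m)
            (_ : Disjoint
              {x : EuclideanSpace ℝ (Fin 0) |
                ∀ i, (j i : ℝ) * 2 ^ (-(m : ℤ)) < x i ∧
                  x i < ((j i : ℝ) + 1) * 2 ^ (-(m : ℤ))} (∅ : Set (EuclideanSpace ℝ (Fin 0)))),
            {x : EuclideanSpace ℝ (Fin 0) |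
              ∀ i, (j i : ℝ) * 2 ^ (-(m : ℤ)) < x i ∧
                x i < ((j i : ℝ) + 1) * 2 ^ (-(m : ℤ))} := by
          intro x _
          apply mem_iUnion.2
          refine ⟨fun i => i.elim0, ?_⟩
          apply mem_iUnion.2
          refine ⟨fun i => i.elim0, ?_⟩
          apply mem_iUnion.2
          exact ⟨Set.disjoint_empty _, fun i => i.elim0⟩
        exact le_trans (measure_mono hU) le_self_add
      · have hKuniv : K = univ := by
          obtain ⟨k, hk⟩ := hKne
          apply eq_univ_of_forall
          intro x
          have hxk : x = k := PiLp.ext fun i => Fin.elim0 i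
          rwa [hxk]
        rw [← hKuniv]
        exact le_add_self
    · -- n ≥ 1
      set ε : ℝ := Real.sqrt n * 2 ^ (-(m:ℤ)) with hεdef
      have hsqn : (0:ℝ) < Real.sqrt n := S15.sqrt_n_pos hn
      have hsq1 : (1:ℝ) ≤ Real.sqrt n := by
        rw [show (1:ℝ) = Real.sqrt 1 from (Real.sqrt_one).symm]
        exact Real.sqrt_le_sqrt (by exact_mod_cast hn)
      have h2m : (0:ℝ) < 2 ^ (-(m:ℤ)) := by positivity
      have hε : 0 < ε := by positivity
      have hε1 : ε < 1 := hsmall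
      have hQfin : μ (S15.Qset n) ≠ ⊤ := S15.isCompact_Qset.measure_lt_top.ne
      by_cases hξ0 : ξ m ≤ 0
      · rw [ENNReal.ofReal_eq_zero.2 hξ0, zero_mul]
        exact zero_le
      push_neg at hξ0
      -- the quantity L = log₂(2^m/√n)
      set L : ℝ := Real.logb 2 ((2:ℝ)^(m:ℕ) / Real.sqrt n) with hLdef
      have hinv : (2:ℝ)^(m:ℕ) / Real.sqrt n = 1/ε := by
        rw [hεdef, zpow_neg, zpow_natCast]
        field_simp
      have hLpos : 0 < L := by
        rw [hLdef, hinv]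
        apply Real.logb_pos one_lt_two
        rw [lt_div_iff₀ hε, one_mul]
        exact hε1
      have h34 : (1:ℝ) < 34 * Real.sqrt n := by nlinarith
      have hlogb34 : 0 < Real.logb 2 (34 * Real.sqrt n) := Real.logb_pos one_lt_two h34
      have hceil0 : 0 ≤ ⌈Real.logb 2 (34 * Real.sqrt n)⌉ := Int.ceil_nonneg hlogb34.le
      set A₀ : ℕ := (⌈Real.logb 2 (34 * Real.sqrt n)⌉).toNat with hA₀def
      have hA₀cast : ((A₀ : ℤ)) = ⌈Real.logb 2 (34 * Real.sqrt n)⌉ :=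
        Int.toNat_of_nonneg hceil0
      have hA₀real : 28 * Real.sqrt n ≤ 2 ^ A₀ := by
        have h1 : Real.logb 2 (34 * Real.sqrt n) ≤ (A₀ : ℝ) := by
          rw [show ((A₀:ℝ)) = ((A₀:ℤ):ℝ) by push_cast; ring, hA₀cast]
          exact Int.le_ceil _
        have h2 : (34:ℝ) * Real.sqrt n = 2 ^ Real.logb 2 (34 * Real.sqrt n) :=
          (Real.rpow_logb two_pos (by norm_num) (by positivity)).symm
        have h3 : (2:ℝ) ^ Real.logb 2 (34 * Real.sqrt n) ≤ (2:ℝ) ^ (A₀:ℝ) :=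
          Real.rpow_le_rpow_of_exponent_le one_le_two h1
        have h4 : (2:ℝ) ^ (A₀:ℝ) = 2 ^ A₀ := Real.rpow_natCast 2 A₀
        nlinarith
      have hδ0 : (0:ℝ) < δ := by linarith
      have hzpow : δ ^ ((4:ℤ) + ⌈Real.logb 2 (34 * Real.sqrt n)⌉) = δ ^ (A₀ + 4) := by
        rw [← hA₀cast, show (4:ℤ) + (A₀:ℤ) = ((A₀ + 4 : ℕ) : ℤ) by push_cast; ring,
          zpow_natCast]
      have hβ : 1 - ξ m = 9 * δ^(A₀+4) * L⁻¹ := by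
        rw [hξ m, hzpow, hLdef]; ring
      have hβpos : 0 < 1 - ξ m := by rw [hβ]; positivity
      have hδpow1 : (1:ℝ) ≤ δ^(A₀+4) := one_le_pow₀ hδ.le
      have hL9 : 9 < L := by
        have h1 : 9 * δ^(A₀+4) * L⁻¹ < 1 := by
          have := hξ0
          rw [show (9:ℝ) * δ^(A₀+4) * L⁻¹ = 1 - ξ m from hβ.symm]
          linarith
        have h2 : 9 * δ^(A₀+4) < L := by
          rw [show (9:ℝ) * δ^(A₀+4) * L⁻¹ = (9 * δ^(A₀+4))/L by ring,
            div_lt_one hLpos] at h1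
          exact h1
        nlinarith
      set M : ℕ := ⌊L⌋₊ with hMdef
      have hM1 : 1 ≤ M := Nat.le_floor (by push_cast; linarith)
      have hML : (M:ℝ) ≤ L := Nat.floor_le hLpos.le
      have hLM1 : L < M + 1 := Nat.lt_floor_add_one L
      have hL9M : L ≤ 9 * M := by nlinarith
      have hεM : ε * 2^M ≤ 1 := by
        have h1 : (2:ℝ)^(M:ℝ) ≤ 2^L := Real.rpow_le_rpow_of_exponent_le one_le_two hML
        have h2 : (2:ℝ)^L = 1/ε := by
          rw [hLdef, hinv]
          exact Real.rpow_logb two_pos (by norm_num) (by positivity)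
        have h3 : (2:ℝ)^(M:ℝ) = 2^(M:ℕ) := Real.rpow_natCast 2 M
        rw [← h3]
        calc ε * (2:ℝ)^(M:ℝ) ≤ ε * (1/ε) := by nlinarith [h1, h2, hε]
          _ = 1 := by field_simp
      -- the thin collar
      set Wg : Set (EuclideanSpace ℝ (Fin n)) :=
        {x | (∃ z ∈ K, dist x z ≤ ε) ∧ x ∉ K} with hWgdef
      have hWbound : μ Wg ≤ ENNReal.ofReal (1 - ξ m) * μ (S15.Qset n) := by
        rcases eq_empty_or_nonempty K with hK0 | hKne
        · have hWg0 : Wg = ∅ := by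
            ext x; simp [hWgdef, hK0]
          rw [hWg0, measure_empty]
          exact zero_le
        · have hsub : Wg ⊆ {x | infDist x (closure K) ≤ ε ∧ x ∉ K} := by
            intro x hx
            obtain ⟨⟨z, hzK, hdz⟩, hxK⟩ := hx
            exact ⟨le_trans (infDist_le_dist_of_mem (subset_closure hzK)) hdz, hxK⟩
          have hKQ' : K ⊆ S15.Qset n := hKQ
          have hcore := S15.core hn μ hδ.le hdbl hK hKne hKQ' hε M A₀ hεM hA₀real
          have hstep : (M:ℝ≥0∞) * μ Wg
              ≤ (M:ℝ≥0∞) * (ENNReal.ofReal (1 - ξ m) * μ (S15.Qset n)) := by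
            calc (M:ℝ≥0∞) * μ Wg
                ≤ (M:ℝ≥0∞) * μ {x | infDist x (closure K) ≤ ε ∧ x ∉ K} :=
                  mul_le_mul_right (measure_mono hsub) _
              _ ≤ (ENNReal.ofReal δ)^(A₀+3) * μ (S15.Qset n) := hcore
              _ ≤ ((M:ℝ≥0∞) * ENNReal.ofReal (1 - ξ m)) * μ (S15.Qset n) := by
                  apply mul_le_mul_left
                  rw [← ENNReal.ofReal_pow hδ0.le,
                    show ((M:ℝ≥0∞)) = ENNReal.ofReal (M:ℝ) from
                      (ENNReal.ofReal_natCast M).symm,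
                    ← ENNReal.ofReal_mul (by positivity)]
                  apply ENNReal.ofReal_le_ofReal
                  rw [hβ]
                  have hδm : δ^(A₀+3) ≤ δ^(A₀+4) :=
                    pow_le_pow_right₀ hδ.le (by omega)
                  have hM9L : 1 ≤ 9 * (M:ℝ) * L⁻¹ := by
                    rw [show (9:ℝ)*(M:ℝ)*L⁻¹ = 9*M/L by ring, le_div_iff₀ hLpos, one_mul]
                    exact hL9M
                  have hδp : (0:ℝ) ≤ δ^(A₀+4) := by positivity
                  calc δ^(A₀+3) ≤ δ^(A₀+4) * 1 := by rw [mul_one]; exact hδm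
                    _ ≤ δ^(A₀+4) * (9 * M * L⁻¹) :=
                        mul_le_mul_of_nonneg_left hM9L hδp
                    _ = (M:ℝ) * (9 * δ^(A₀+4) * L⁻¹) := by ring
              _ = (M:ℝ≥0∞) * (ENNReal.ofReal (1 - ξ m) * μ (S15.Qset n)) := by
                  rw [mul_assoc]
          have hM0 : (M:ℝ≥0∞) ≠ 0 := Nat.cast_ne_zero.2 (by omega)
          exact (ENNReal.mul_le_mul_iff_right hM0 (ENNReal.natCast_ne_top M)).1 hstep
      -- the covering
      have hgrid0 : μ (⋃ (i : Fin n), ⋃ (k : ℕ),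
          {x : EuclideanSpace ℝ (Fin n) |
            x ∈ S15.Qset n ∧ k ≤ 2^m ∧ x i = (k:ℝ) * 2^(-(m:ℤ))}) = 0 := by
        apply measure_iUnion_null
        intro i
        apply measure_iUnion_null
        intro k
        by_cases hk : k ≤ 2^m
        · apply measure_mono_null
            (fun x hx => ⟨hx.1, hx.2.2⟩ :
              _ ⊆ {x : EuclideanSpace ℝ (Fin n) |
                x ∈ S15.Qset n ∧ x i = (k:ℝ)*2^(-(m:ℤ))})
          apply S15.slice_null hn μ hδ.le hdbl hQfin i
          · positivity
          · have hkr : (k:ℝ) ≤ 2^(m:ℕ) := by exact_mod_cast hk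
            calc (k:ℝ) * 2^(-(m:ℤ)) ≤ 2^(m:ℕ) * 2^(-(m:ℤ)) := by nlinarith
              _ = 1 := by
                  rw [← zpow_natCast (2:ℝ) m, ← zpow_add₀ (two_ne_zero)]
                  simp
        · have hempty : {x : EuclideanSpace ℝ (Fin n) |
              x ∈ S15.Qset n ∧ k ≤ 2^m ∧ x i = (k:ℝ) * 2^(-(m:ℤ))} = ∅ := by
            ext x; simp [hk]
          rw [hempty]
          exact measure_empty
      have hcov := S15.cover hn m K
      rw [← hεdef] at hcov
      rw [← hWgdef] at hcov
      set UU : Set (EuclideanSpace ℝ (Fin n)) :=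
        (⋃ (j : Fin n → ℤ) (_ : ∀ i, 0 ≤ j i ∧ j i < 2 ^ m)
            (_ : Disjoint
              {x : EuclideanSpace ℝ (Fin n) |
                ∀ i, (j i : ℝ) * 2 ^ (-(m : ℤ)) < x i ∧
                  x i < ((j i : ℝ) + 1) * 2 ^ (-(m : ℤ))} K),
            {x : EuclideanSpace ℝ (Fin n) |
              ∀ i, (j i : ℝ) * 2 ^ (-(m : ℤ)) < x i ∧
                x i < ((j i : ℝ) + 1) * 2 ^ (-(m : ℤ))}) with hUUdef
      set gridS : Set (EuclideanSpace ℝ (Fin n)) :=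
        (⋃ (i : Fin n), ⋃ (k : ℕ),
          {x : EuclideanSpace ℝ (Fin n) |
            x ∈ S15.Qset n ∧ k ≤ 2^m ∧ x i = (k:ℝ) * 2^(-(m:ℤ))}) with hgridSdef
      have hQle : μ (S15.Qset n) ≤ (μ UU + μ K) + μ Wg := by
        calc μ (S15.Qset n) ≤ μ (UU ∪ K ∪ Wg ∪ gridS) := measure_mono hcov
          _ ≤ μ (UU ∪ K ∪ Wg) + μ gridS := measure_union_le _ _
          _ ≤ (μ (UU ∪ K) + μ Wg) + μ gridS :=
              add_le_add_left (measure_union_le _ _) _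
          _ ≤ ((μ UU + μ K) + μ Wg) + μ gridS :=
              add_le_add_left (add_le_add_left (measure_union_le _ _) _) _
          _ = (μ UU + μ K) + μ Wg := by rw [hgrid0, add_zero]
      have h2 := le_trans hQle (add_le_add_right hWbound _)
      have hsplit : ENNReal.ofReal (ξ m) * μ (S15.Qset n)
          + ENNReal.ofReal (1 - ξ m) * μ (S15.Qset n) = μ (S15.Qset n) := by
        rw [← add_mul, ← ENNReal.ofReal_add hξ0.le hβpos.le,
          show ξ m + (1 - ξ m) = 1 by ring, ENNReal.ofReal_one, one_mul]
      have hfin : ENNReal.ofReal (1 - ξ m) * μ (S15.Qset n) ≠ ⊤ :=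
        ENNReal.mul_ne_top ENNReal.ofReal_ne_top hQfin
      rw [hQQ]
      refine (ENNReal.add_le_add_iff_right hfin).1 ?_
      rw [hsplit]
      exact h2
  · -- the limit
    rcases Nat.eq_zero_or_pos n with hn0 | hn
    · subst hn0
      have hone : ξ = fun _ => (1:ℝ) := by
        funext j
        rw [hξ j]
        norm_num [Real.sqrt_zero, Real.logb_zero]
      rw [hone]
      exact tendsto_const_nhds
    · have hsqn : (0:ℝ) < Real.sqrt n := S15.sqrt_n_pos hn
      have hXi : ξ = fun j : ℕ => 1 - 9 * δ ^ ((4 : ℤ) + ⌈Real.logb 2 (34 * Real.sqrt n)⌉) *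
          (Real.logb 2 ((2 : ℝ) ^ j / Real.sqrt n))⁻¹ := funext hξ
      rw [hXi]
      have heq : ∀ j : ℕ, Real.logb 2 ((2:ℝ) ^ j / Real.sqrt n)
          = (j : ℝ) - Real.logb 2 (Real.sqrt n) := by
        intro j
        rw [Real.logb_div (by positivity) (ne_of_gt hsqn)]
        congr 1
        rw [Real.logb_pow]
        simp [Real.logb_self_eq_one]
      have h1 : Tendsto (fun j : ℕ => Real.logb 2 ((2:ℝ) ^ j / Real.sqrt n)) atTop atTop := by
        have h0 : Tendsto (fun j : ℕ => (j:ℝ) - Real.logb 2 (Real.sqrt n)) atTop atTop :=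
          tendsto_atTop_add_const_right atTop _ tendsto_natCast_atTop_atTop
        refine h0.congr ?_
        intro j
        rw [heq j]
      have h2 : Tendsto (fun j : ℕ =>
          (Real.logb 2 ((2:ℝ) ^ j / Real.sqrt n))⁻¹) atTop (𝓝 0) :=
        tendsto_inv_atTop_zero.comp h1
      have h3 := h2.const_mul (9 * δ ^ ((4 : ℤ) + ⌈Real.logb 2 (34 * Real.sqrt n)⌉))
      rw [mul_zero] at h3
      have h4 := h3.const_sub 1
      rw [sub_zero] at h4
      exact h4
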